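/- Let M be the free monoid on generators {αᵢ}_{i∈ℕ} ∪ {eⱼ}_{j∈ℕ}, M_α the submonoid generated by the α's, and K = ⋃_{j≥1} eⱼ M_α. For finitely supported functions pᵢ on M_α (i = 1, …, k), the left-convolution operator norm of Σᵢ δ_{eᵢ} * pᵢ on ℓ²(M) equals ‖Σᵢ pᵢ* * pᵢ‖^{1/2}, the square root of the operator norm of Σᵢ pᵢ* * pᵢ, where pᵢ*(x) = conj(pᵢ(x⁻¹))-analogue; equivalently, it equals sup{(Σᵢ ‖pᵢ * q‖₂²)^{1/2} : q finitely supported on M_α, ‖q‖₂ ≤ 1}. -/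

import Mathlib

/-- The free monoid on two countable families of generators `αᵢ` (left) and `eⱼ` (right). -/
abbrev MInf : Type := FreeMonoid (ℕ ⊕ ℕ)

/-- The ℓ² norm of a finitely supported function on the free monoid. -/
noncomputable def l2norm (p : MonoidAlgebra ℂ MInf) : ℝ :=
  Real.sqrt (∑ x ∈ p.coeff.support, ‖p.coeff x‖ ^ 2)

/-- A finitely supported function is supported on the submonoid `M_α` of words in the
`α` generators if every letter of every word of its support is an `α`. -/
def SupportedOnAlpha (p : MonoidAlgebra ℂ MInf) : Prop :=
  ∀ x ∈ p.coeff.support, ∀ l ∈ x.toList, l.isLeft = true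

namespace ColAux
open Finsupp
open scoped Pointwise

noncomputable def L2sq (p : MonoidAlgebra ℂ MInf) : ℝ := ∑ x ∈ p.coeff.support, ‖p.coeff x‖ ^ 2

lemma L2sq_nonneg (p : MonoidAlgebra ℂ MInf) : 0 ≤ L2sq p :=
  Finset.sum_nonneg fun _ _ => by positivity

lemma l2norm_eq (p : MonoidAlgebra ℂ MInf) : l2norm p = Real.sqrt (L2sq p) := rfl

lemma sq_l2norm (p : MonoidAlgebra ℂ MInf) : l2norm p ^ 2 = L2sq p :=
  Real.sq_sqrt (L2sq_nonneg p)

lemma L2sq_eq_sum (p : MonoidAlgebra ℂ MInf) (s : Finset MInf) (hs : p.coeff.support ⊆ s) :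
    L2sq p = ∑ x ∈ s, ‖p.coeff x‖ ^ 2 := by
  refine Finset.sum_subset hs fun x _ hx => ?_
  rw [Finsupp.notMem_support_iff.mp hx]; simp

lemma L2sq_zero : L2sq (0 : MonoidAlgebra ℂ MInf) = 0 := by simp [L2sq]

lemma L2sq_pos {q : MonoidAlgebra ℂ MInf} (h : q ≠ 0) : 0 < L2sq q := by
  obtain ⟨x, hx⟩ := Finsupp.support_nonempty_iff.mpr (mt MonoidAlgebra.coeff_eq_zero.mp h)
  refine Finset.sum_pos' (fun _ _ => by positivity) ⟨x, hx, ?_⟩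
  have h2 := Finsupp.mem_support_iff.mp hx
  have : 0 < ‖q.coeff x‖ := norm_pos_iff.mpr h2
  positivity

lemma L2sq_smul (c : ℂ) (q : MonoidAlgebra ℂ MInf) : L2sq (c • q) = ‖c‖ ^ 2 * L2sq q := by
  rw [L2sq_eq_sum (c • q) q.coeff.support (by rw [MonoidAlgebra.coeff_smul]; exact Finsupp.support_smul), L2sq, Finset.mul_sum]
  refine Finset.sum_congr rfl fun x _ => ?_
  rw [MonoidAlgebra.coeff_smul, Finsupp.smul_apply, smul_eq_mul, norm_mul, mul_pow]

lemma L2sq_mapDomain (f : MInf → MInf) (hf : Function.Injective f) (q : MonoidAlgebra ℂ MInf) :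
    L2sq (MonoidAlgebra.mapDomain f q) = L2sq q := by
  classical
  show ∑ x ∈ (Finsupp.mapDomain f q.coeff).support, ‖(Finsupp.mapDomain f q.coeff) x‖ ^ 2 = _
  rw [ Finsupp.mapDomain_support_of_injective hf, Finset.sum_image
    (fun a _ b _ h => hf h)]
  exact Finset.sum_congr rfl fun x _ => by rw [Finsupp.mapDomain_apply hf]

lemma single_mul_eq_mapDomain (c : MInf) (b : ℂ) (q : MonoidAlgebra ℂ MInf) :
    MonoidAlgebra.single c b * q = b • MonoidAlgebra.mapDomain (fun x => c * x) q := by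
  apply MonoidAlgebra.coeff_injective
  ext x
  rw [MonoidAlgebra.coeff_smul, Finsupp.smul_apply]
  by_cases hx : ∃ v, c * v = x
  · obtain ⟨v, rfl⟩ := hx
    rw [MonoidAlgebra.coeff_single_mul_mul]
    show _ = b • Finsupp.mapDomain (fun x => c * x) q.coeff (c * v)
    rw [Finsupp.mapDomain_apply (fun x y h => mul_left_cancel h), smul_eq_mul]
  · push_neg at hx
    rw [MonoidAlgebra.coeff_single_mul_of_forall_mul_ne _ _ hx]
    show _ = b • Finsupp.mapDomain (fun x => c * x) q.coeff x
    rw [Finsupp.mapDomain_of_notMem_range, smul_zero]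
    rintro ⟨v, rfl⟩; exact hx v rfl

end ColAux

namespace ColAux
open Finsupp
open scoped Pointwise

lemma L2sq_finsum {ι : Type*} (s : Finset ι) (f : ι → MonoidAlgebra ℂ MInf)
    (hd : (s : Set ι).PairwiseDisjoint fun i => (f i).coeff.support) :
    L2sq (∑ i ∈ s, f i) = ∑ i ∈ s, L2sq (f i) := by
  classical
  have hsub : (∑ i ∈ s, f i).coeff.support ⊆ s.biUnion fun i => (f i).coeff.support := by
    intro a ha
    rw [MonoidAlgebra.coeff_sum] at ha
    obtain ⟨c, hc, hac⟩ := Finsupp.mem_support_finsetSum a ha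
    exact Finset.mem_biUnion.mpr ⟨c, hc, hac⟩
  rw [L2sq_eq_sum _ (s.biUnion fun i => (f i).coeff.support) hsub, Finset.sum_biUnion hd]
  refine Finset.sum_congr rfl fun i hi => ?_
  refine Finset.sum_congr rfl fun x hx => ?_
  have hx' : (∑ j ∈ s, f j).coeff x = (f i).coeff x := by
    rw [MonoidAlgebra.coeff_sum, Finset.sum_apply' x]
    refine Finset.sum_eq_single i (fun j hj hji => ?_) (fun h => absurd hi h)
    have hnx : x ∉ (f j).coeff.support := Finset.disjoint_right.mp (hd hj hi hji) hx
    exact Finsupp.notMem_support_iff.mp hnx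
  rw [hx']

lemma support_single_mul (c : MInf) (b : ℂ) (q : MonoidAlgebra ℂ MInf) (x : MInf)
    (hx : x ∈ (MonoidAlgebra.single c b * q).coeff.support) : ∃ v, x = c * v := by
  classical
  rw [single_mul_eq_mapDomain] at hx
  have h1 : x ∈ (Finsupp.mapDomain (fun y => c * y) q.coeff).support := by
    rw [MonoidAlgebra.coeff_smul] at hx
    exact Finset.mem_of_subset (Finsupp.support_smul) hx
  have h2 := Finset.mem_of_subset Finsupp.mapDomain_support h1
  obtain ⟨v, _, rfl⟩ := Finset.mem_image.mp h2
  exact ⟨v, rfl⟩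

/-- Lemma A : pieces starting with distinct `e i` letters are ℓ²-orthogonal. -/
lemma L2sq_shift_sum {k : ℕ} (r : Fin k → MonoidAlgebra ℂ MInf) :
    L2sq (∑ i : Fin k, MonoidAlgebra.single (FreeMonoid.of (Sum.inr (i : ℕ))) 1 * r i)
      = ∑ i : Fin k, L2sq (r i) := by
  classical
  rw [L2sq_finsum]
  · refine Finset.sum_congr rfl fun i _ => ?_
    rw [single_mul_eq_mapDomain, one_smul, L2sq_mapDomain]
    exact fun x y h => mul_left_cancel h
  · intro i _ j _ hij
    refine Finset.disjoint_left.mpr fun x hxi hxj => ?_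
    obtain ⟨v, rfl⟩ := support_single_mul _ _ _ _ hxi
    obtain ⟨v', hv'⟩ := support_single_mul _ _ _ _ hxj
    have : Sum.inr (i : ℕ) = (Sum.inr (j : ℕ) : ℕ ⊕ ℕ) := by
      have := congrArg FreeMonoid.toList hv'
      rw [FreeMonoid.toList_mul, FreeMonoid.toList_mul, FreeMonoid.toList_of,
        FreeMonoid.toList_of] at this
      exact (List.cons.injEq _ _ _ _ ▸ this).1
    exact hij (by simpa [Fin.val_inj] using Sum.inr.inj this)

end ColAux

namespace ColAux
open Finsupp FreeMonoid

abbrev AllLeft (x : MInf) : Prop := ∀ l ∈ x.toList, l.isLeft = true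

def key (x : MInf) : MInf := FreeMonoid.ofList (x.toList.dropWhile (fun l => l.isLeft))

def Reduced (w : MInf) : Prop := ∀ h ∈ (FreeMonoid.toList w).head?, h.isLeft = false

lemma toList_inj {a b : MInf} (h : FreeMonoid.toList a = FreeMonoid.toList b) : a = b := by
  have := congrArg FreeMonoid.ofList h
  rwa [FreeMonoid.ofList_toList, FreeMonoid.ofList_toList] at this

lemma allLeft_mul {a b : MInf} (ha : AllLeft a) (hb : AllLeft b) : AllLeft (a * b) := by
  intro l hl
  rw [FreeMonoid.toList_mul, List.mem_append] at hl
  exact hl.elim (ha l) (hb l)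

lemma key_mul {a x : MInf} (ha : AllLeft a) : key (a * x) = key x := by
  unfold key
  congr 1
  rw [FreeMonoid.toList_mul]
  exact List.dropWhile_append_of_pos ha

lemma reduced_key (x : MInf) : Reduced (key x) := by
  intro h hh
  rw [key, FreeMonoid.toList_ofList] at hh
  have H := List.head?_dropWhile_not (fun l => l.isLeft) x.toList
  rw [Option.mem_def] at hh
  rw [hh] at H
  exact H

lemma reduced_dropWhile {w : MInf} (hw : Reduced w) :
    w.toList.dropWhile (fun l => l.isLeft) = w.toList := by
  cases hl : FreeMonoid.toList w with
  | nil => simp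
  | cons h t =>
    have hh : h.isLeft = false := hw h (by rw [hl]; rfl)
    rw [List.dropWhile_cons, hh]
    simp

lemma reduced_takeWhile {w : MInf} (hw : Reduced w) :
    w.toList.takeWhile (fun l => l.isLeft) = [] := by
  cases hl : FreeMonoid.toList w with
  | nil => simp
  | cons h t =>
    have hh : h.isLeft = false := hw h (by rw [hl]; rfl)
    rw [List.takeWhile_cons, hh]
    simp

lemma key_mul_reduced {a w : MInf} (ha : AllLeft a) (hw : Reduced w) : key (a * w) = w := by
  rw [key_mul ha, key, reduced_dropWhile hw, FreeMonoid.ofList_toList]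

lemma decomp (x : MInf) :
    FreeMonoid.ofList (x.toList.takeWhile (fun l => l.isLeft)) * key x = x := by
  apply toList_inj
  rw [FreeMonoid.toList_mul, key, FreeMonoid.toList_ofList, FreeMonoid.toList_ofList,
    List.takeWhile_append_dropWhile]

lemma allLeft_takeWhile (x : MInf) :
    AllLeft (FreeMonoid.ofList (x.toList.takeWhile (fun l => l.isLeft))) := by
  intro l hl
  rw [FreeMonoid.toList_ofList] at hl
  exact List.mem_takeWhile_imp hl

lemma takeWhile_mul_reduced {a w : MInf} (ha : AllLeft a) (hw : Reduced w) :
    ((a * w).toList.takeWhile (fun l => l.isLeft)) = a.toList := by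
  rw [FreeMonoid.toList_mul, List.takeWhile_append_of_pos ha, reduced_takeWhile hw,
    List.append_nil]

noncomputable def piece (q : MonoidAlgebra ℂ MInf) (w : MInf) : MonoidAlgebra ℂ MInf :=
  MonoidAlgebra.ofCoeff (@Finsupp.filter _ _ _ AllLeft (Classical.decPred _)
    (Finsupp.comapDomain (· * w) q.coeff (mul_left_injective w).injOn))

lemma piece_apply_pos (q : MonoidAlgebra ℂ MInf) (w : MInf) {a : MInf} (ha : AllLeft a) :
    (piece q w).coeff a = q.coeff (a * w) := by
  letI := Classical.decPred AllLeft
  rw [piece, MonoidAlgebra.coeff_ofCoeff, Finsupp.filter_apply, if_pos ha, Finsupp.comapDomain_apply]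

lemma piece_apply_neg (q : MonoidAlgebra ℂ MInf) (w : MInf) {a : MInf} (ha : ¬ AllLeft a) :
    (piece q w).coeff a = 0 := by
  letI := Classical.decPred AllLeft
  rw [piece, MonoidAlgebra.coeff_ofCoeff, Finsupp.filter_apply, if_neg ha]

lemma piece_supported (q : MonoidAlgebra ℂ MInf) (w : MInf) : SupportedOnAlpha (piece q w) := by
  intro x hx
  by_contra hc
  push_neg at hc
  obtain ⟨l, hl, hll⟩ := hc
  have : ¬ AllLeft x := fun h => by simp [h l hl] at hll
  exact Finsupp.mem_support_iff.mp hx (piece_apply_neg q w this)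

lemma single_mul_apply_exists (u v : MInf) (b : ℂ) (q : MonoidAlgebra ℂ MInf) :
    (MonoidAlgebra.single u b * q).coeff (u * v) = b * q.coeff v :=
  MonoidAlgebra.coeff_single_mul_mul q b u v

lemma single_mul_apply_ne (u : MInf) (b : ℂ) (q : MonoidAlgebra ℂ MInf) (x : MInf)
    (h : ∀ v, u * v ≠ x) : (MonoidAlgebra.single u b * q).coeff x = 0 :=
  MonoidAlgebra.coeff_single_mul_of_forall_mul_ne b q h

/-- Core lemma B1. -/
lemma conv_piece_apply (r q : MonoidAlgebra ℂ MInf) (hr : SupportedOnAlpha r)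
    {w : MInf} (hw : Reduced w) {a : MInf} (ha : AllLeft a) :
    (r * piece q w).coeff a = (r * q).coeff (a * w) := by
  classical
  conv_lhs => rw [← MonoidAlgebra.sum_coeff_single r]
  conv_rhs => rw [← MonoidAlgebra.sum_coeff_single r]
  rw [Finsupp.sum, Finset.sum_mul, Finset.sum_mul, MonoidAlgebra.coeff_sum, MonoidAlgebra.coeff_sum,
    Finset.sum_apply' a,
    Finset.sum_apply' (a * w)]
  refine Finset.sum_congr rfl fun u hu => ?_
  have hu' : AllLeft u := hr u hu
  by_cases hpre : u.toList <+: a.toList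
  · obtain ⟨t, ht⟩ := hpre
    set v : MInf := FreeMonoid.ofList t with hv
    have hav : a = u * v := by
      apply toList_inj
      rw [FreeMonoid.toList_mul, hv, FreeMonoid.toList_ofList, ht]
    have hvleft : AllLeft v := by
      intro l hl
      refine ha l ?_
      rw [← ht, List.mem_append]
      right
      rwa [hv, FreeMonoid.toList_ofList] at hl
    rw [hav, single_mul_apply_exists, mul_assoc, single_mul_apply_exists,
      piece_apply_pos q w hvleft]
  · rw [single_mul_apply_ne, single_mul_apply_ne]
    · intro v' he
      have hel : u.toList ++ v'.toList = a.toList ++ w.toList := by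
        have := congrArg FreeMonoid.toList he
        rwa [FreeMonoid.toList_mul, FreeMonoid.toList_mul] at this
      have hupre : u.toList <+: a.toList ++ w.toList := ⟨v'.toList, hel⟩
      have hapre : a.toList <+: a.toList ++ w.toList := ⟨w.toList, rfl⟩
      rcases le_or_gt u.toList.length a.toList.length with hle | hlt
      · exact hpre (List.prefix_of_prefix_length_le hupre hapre hle)
      · obtain ⟨s, hs⟩ := List.prefix_of_prefix_length_le hapre hupre hlt.le
        cases s with
        | nil =>
          rw [List.append_nil] at hs
          rw [hs] at hlt
          exact absurd rfl hlt.ne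
        | cons b bs =>
          have hb : b.isLeft = true := hu' b (by rw [← hs]; simp)
          have hwl : w.toList = b :: (bs ++ v'.toList) := by
            have h2 : a.toList ++ ((b :: bs) ++ v'.toList) = a.toList ++ w.toList := by
              rw [← List.append_assoc, hs, hel]
            have := List.append_cancel_left h2
            simpa using this.symm
          have := hw b (by rw [hwl]; rfl)
          rw [hb] at this
          exact Bool.noConfusion this
    · intro v hv
      exact hpre ⟨v.toList, by rw [← FreeMonoid.toList_mul, hv]⟩

end ColAux

namespace ColAux
open Finsupp FreeMonoid

open scoped Classical

lemma supportedOnAlpha_mul {r s : MonoidAlgebra ℂ MInf} (hr : SupportedOnAlpha r)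
    (hs : SupportedOnAlpha s) : SupportedOnAlpha (r * s) := by
  classical
  intro x hx
  have := MonoidAlgebra.support_coeff_mul_subset r s hx
  obtain ⟨u, hu, v, hv, rfl⟩ := Finset.mem_mul.mp this
  exact allLeft_mul (hr u hu) (hs v hv)

lemma one_supported : SupportedOnAlpha (1 : MonoidAlgebra ℂ MInf) := by
  intro x hx
  have : x ∈ ({(1 : MInf)} : Finset MInf) :=
    MonoidAlgebra.support_coeff_one_subset hx
  rw [Finset.mem_singleton] at this
  subst this
  intro l hl
  exact absurd hl (by simp [FreeMonoid.toList_one])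

/-- Lemma B2 : coset decomposition of the ℓ² mass of a convolution with
an `M_α`-supported function. -/
lemma L2sq_conv_decomp (r q : MonoidAlgebra ℂ MInf) (hr : SupportedOnAlpha r) :
    L2sq (r * q) = ∑ w ∈ q.coeff.support.image key, L2sq (r * piece q w) := by
  classical
  have hmaps : ∀ x ∈ (r * q).coeff.support, key x ∈ q.coeff.support.image key := by
    intro x hx
    obtain ⟨u, hu, v, hv, rfl⟩ := Finset.mem_mul.mp (MonoidAlgebra.support_coeff_mul_subset r q hx)
    exact Finset.mem_image.mpr ⟨v, hv, (key_mul (hr u hu)).symm⟩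
  rw [L2sq, ← Finset.sum_fiberwise_of_maps_to hmaps]
  refine Finset.sum_congr rfl fun w hw => ?_
  obtain ⟨v0, _, rfl⟩ := Finset.mem_image.mp hw
  set w := key v0
  have hwred : Reduced w := reduced_key v0
  rw [L2sq]
  refine Finset.sum_nbij' (fun x => FreeMonoid.ofList (x.toList.takeWhile (fun l => l.isLeft)))
    (fun a => a * w) ?_ ?_ ?_ ?_ ?_
  · -- forward maps into support of r * piece
    intro x hx
    obtain ⟨hx1, hx2⟩ := Finset.mem_filter.mp hx
    have hxd : FreeMonoid.ofList (x.toList.takeWhile (fun l => l.isLeft)) * w = x := by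
      rw [← hx2]; exact decomp x
    have haleft := allLeft_takeWhile x
    rw [Finsupp.mem_support_iff, conv_piece_apply r q hr hwred haleft, hxd]
    exact Finsupp.mem_support_iff.mp hx1
  · -- backward maps into the fiber
    intro a ha
    have haleft : AllLeft a := supportedOnAlpha_mul hr (piece_supported q w) a ha
    refine Finset.mem_filter.mpr ⟨?_, key_mul_reduced haleft hwred⟩
    rw [Finsupp.mem_support_iff, ← conv_piece_apply r q hr hwred haleft]
    exact Finsupp.mem_support_iff.mp ha
  · -- left inverse
    intro x hx
    obtain ⟨_, hx2⟩ := Finset.mem_filter.mp hx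
    rw [← hx2]; exact decomp x
  · -- right inverse
    intro a ha
    have haleft : AllLeft a := supportedOnAlpha_mul hr (piece_supported q w) a ha
    apply toList_inj
    rw [FreeMonoid.toList_ofList, takeWhile_mul_reduced haleft hwred]
  · -- values agree
    intro x hx
    obtain ⟨hx1, hx2⟩ := Finset.mem_filter.mp hx
    have hxd : FreeMonoid.ofList (x.toList.takeWhile (fun l => l.isLeft)) * w = x := by
      rw [← hx2]; exact decomp x
    rw [conv_piece_apply r q hr hwred (allLeft_takeWhile x), hxd]

lemma L2sq_decomp (q : MonoidAlgebra ℂ MInf) :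
    L2sq q = ∑ w ∈ q.coeff.support.image key, L2sq (piece q w) := by
  have := L2sq_conv_decomp 1 q one_supported
  simpa [one_mul] using this

end ColAux

namespace ColAux
open Finsupp
open scoped Pointwise

lemma L2sq_single_mul (u : MInf) (c : ℂ) (q : MonoidAlgebra ℂ MInf) :
    L2sq (MonoidAlgebra.single u c * q) = ‖c‖ ^ 2 * L2sq q := by
  rw [single_mul_eq_mapDomain, L2sq_smul,
    L2sq_mapDomain _ (fun x y h => mul_left_cancel h)]

lemma L2sq_mul_le (r q : MonoidAlgebra ℂ MInf) :
    L2sq (r * q) ≤ (r.coeff.support.card : ℝ) * L2sq r * L2sq q := by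
  classical
  set T := r.coeff.support * q.coeff.support with hT
  have hsup : ∀ u ∈ r.coeff.support, (MonoidAlgebra.single u (r.coeff u) * q).coeff.support ⊆ T := by
    intro u hu
    refine (MonoidAlgebra.support_coeff_mul_subset _ _).trans (Finset.mul_subset_mul ?_ le_rfl)
    exact Finsupp.support_single_subset.trans (Finset.singleton_subset_iff.mpr hu)
  have hrw : r * q = ∑ u ∈ r.coeff.support, MonoidAlgebra.single u (r.coeff u) * q := by
    conv_lhs => rw [← MonoidAlgebra.sum_coeff_single r]
    rw [Finsupp.sum, Finset.sum_mul]
  have hsub : (r * q).coeff.support ⊆ T := by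
    rw [hrw]
    intro x hx
    rw [MonoidAlgebra.coeff_sum] at hx
    obtain ⟨u, hu, hxu⟩ := Finsupp.mem_support_finsetSum x hx
    exact hsup u hu hxu
  calc L2sq (r * q) = ∑ x ∈ T, ‖(r * q).coeff x‖ ^ 2 := L2sq_eq_sum _ _ hsub
    _ ≤ ∑ x ∈ T, (r.coeff.support.card : ℝ) *
        ∑ u ∈ r.coeff.support, ‖(MonoidAlgebra.single u (r.coeff u) * q).coeff x‖ ^ 2 := by
        refine Finset.sum_le_sum fun x _ => ?_
        have h1 : ‖(r * q).coeff x‖ ≤ ∑ u ∈ r.coeff.support, ‖(MonoidAlgebra.single u (r.coeff u) * q).coeff x‖ := by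
          rw [hrw, MonoidAlgebra.coeff_sum, Finset.sum_apply' x]
          exact norm_sum_le _ _
        calc ‖(r * q).coeff x‖ ^ 2
            ≤ (∑ u ∈ r.coeff.support, ‖(MonoidAlgebra.single u (r.coeff u) * q).coeff x‖) ^ 2 :=
              pow_le_pow_left₀ (norm_nonneg _) h1 2
          _ ≤ _ := sq_sum_le_card_mul_sum_sq
    _ = (r.coeff.support.card : ℝ) *
        ∑ u ∈ r.coeff.support, ∑ x ∈ T, ‖(MonoidAlgebra.single u (r.coeff u) * q).coeff x‖ ^ 2 := by
        rw [← Finset.mul_sum, Finset.sum_comm]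
    _ = (r.coeff.support.card : ℝ) * ∑ u ∈ r.coeff.support, ‖r.coeff u‖ ^ 2 * L2sq q := by
        congr 1
        refine Finset.sum_congr rfl fun u hu => ?_
        rw [← L2sq_eq_sum _ _ (hsup u hu), L2sq_single_mul]
    _ = (r.coeff.support.card : ℝ) * L2sq r * L2sq q := by
        rw [← Finset.sum_mul, mul_assoc]
        rfl

lemma l2norm_zero : l2norm (0 : MonoidAlgebra ℂ MInf) = 0 := by
  rw [l2norm_eq, L2sq_zero, Real.sqrt_zero]

lemma supported_zero : SupportedOnAlpha (0 : MonoidAlgebra ℂ MInf) := by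
  intro x hx
  simp at hx

lemma L2sq_le_one {q : MonoidAlgebra ℂ MInf} (hq : l2norm q ≤ 1) : L2sq q ≤ 1 := by
  have := pow_le_pow_left₀ (Real.sqrt_nonneg (L2sq q)) (l2norm_eq q ▸ hq) 2
  rwa [Real.sq_sqrt (L2sq_nonneg q), one_pow] at this

end ColAux


open ColAux

/-- For `p₁, …, p_k` supported on `M_α`, the left-convolution operator norm of
`Σᵢ δ_{eᵢ} * pᵢ` on `ℓ²(M)` equals
`sup {(Σᵢ ‖pᵢ * q‖₂²)^{1/2} : q supported on M_α, ‖q‖₂ ≤ 1}`. -/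
theorem column_norm_of_shifted_sum {k : ℕ} (p : Fin k → MonoidAlgebra ℂ MInf)
    (hp : ∀ i, SupportedOnAlpha (p i)) :
    sSup {t : ℝ | ∃ q : MonoidAlgebra ℂ MInf, l2norm q ≤ 1 ∧
        t = l2norm ((∑ i : Fin k,
          MonoidAlgebra.single (FreeMonoid.of (Sum.inr (i : ℕ))) 1 * p i) * q)}
      = sSup {t : ℝ | ∃ q : MonoidAlgebra ℂ MInf, SupportedOnAlpha q ∧ l2norm q ≤ 1 ∧
          t = Real.sqrt (∑ i : Fin k, (l2norm (p i * q)) ^ 2)} := by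
  classical
  set A : MonoidAlgebra ℂ MInf :=
    ∑ i : Fin k, MonoidAlgebra.single (FreeMonoid.of (Sum.inr (i : ℕ))) 1 * p i with hA
  -- the key isometry identity, valid for every q
  have key1 : ∀ q : MonoidAlgebra ℂ MInf,
      l2norm (A * q) = Real.sqrt (∑ i : Fin k, L2sq (p i * q)) := by
    intro q
    have hAq : A * q = ∑ i : Fin k,
        MonoidAlgebra.single (FreeMonoid.of (Sum.inr (i : ℕ))) 1 * (p i * q) := by
      rw [hA, Finset.sum_mul]
      exact Finset.sum_congr rfl fun i _ => mul_assoc _ _ _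
    rw [l2norm_eq, hAq, L2sq_shift_sum]
  -- rewrite of the RHS-type expression
  have key2 : ∀ q : MonoidAlgebra ℂ MInf,
      Real.sqrt (∑ i : Fin k, (l2norm (p i * q)) ^ 2)
        = Real.sqrt (∑ i : Fin k, L2sq (p i * q)) := by
    intro q
    congr 1
    exact Finset.sum_congr rfl fun i _ => sq_l2norm _
  -- crude uniform bound
  set C : ℝ := ∑ i : Fin k, ((p i).coeff.support.card : ℝ) * L2sq (p i) with hC
  have hbound : ∀ q : MonoidAlgebra ℂ MInf, l2norm q ≤ 1 →
      ∑ i : Fin k, L2sq (p i * q) ≤ C := by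
    intro q hq
    refine Finset.sum_le_sum fun i _ => ?_
    calc L2sq (p i * q) ≤ ((p i).coeff.support.card : ℝ) * L2sq (p i) * L2sq q :=
          L2sq_mul_le (p i) q
      _ ≤ ((p i).coeff.support.card : ℝ) * L2sq (p i) * 1 := by
          exact mul_le_mul_of_nonneg_left (L2sq_le_one hq)
            (mul_nonneg (by positivity) (L2sq_nonneg _))
      _ = _ := mul_one _
  -- the two sets
  set LS : Set ℝ := {t : ℝ | ∃ q : MonoidAlgebra ℂ MInf, l2norm q ≤ 1 ∧ t = l2norm (A * q)}
    with hLS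
  set RS : Set ℝ := {t : ℝ | ∃ q : MonoidAlgebra ℂ MInf, SupportedOnAlpha q ∧ l2norm q ≤ 1 ∧
      t = Real.sqrt (∑ i : Fin k, (l2norm (p i * q)) ^ 2)} with hRS
  have hbddL : BddAbove LS := by
    refine ⟨Real.sqrt C, fun t ht => ?_⟩
    obtain ⟨q, hq1, rfl⟩ := ht
    rw [key1 q]
    exact Real.sqrt_le_sqrt (hbound q hq1)
  have hbddR : BddAbove RS := by
    refine ⟨Real.sqrt C, fun t ht => ?_⟩
    obtain ⟨q, _, hq1, rfl⟩ := ht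
    rw [key2 q]
    exact Real.sqrt_le_sqrt (hbound q hq1)
  have hmem0R : (0 : ℝ) ∈ RS := by
    refine ⟨0, supported_zero, by rw [l2norm_zero]; exact zero_le_one, ?_⟩
    simp [mul_zero, l2norm_zero]
  have hmem0L : (0 : ℝ) ∈ LS := by
    refine ⟨0, by rw [l2norm_zero]; exact zero_le_one, ?_⟩
    rw [mul_zero, l2norm_zero]
  have hS0 : 0 ≤ sSup RS := le_csSup hbddR hmem0R
  refine le_antisymm ?_ (csSup_le_csSup hbddL ⟨0, hmem0R⟩ ?_)
  · -- LHS ≤ RHS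
    refine csSup_le ⟨0, hmem0L⟩ fun t ht => ?_
    obtain ⟨q, hq1, rfl⟩ := ht
    rw [key1 q]
    have hclaim : ∑ i : Fin k, L2sq (p i * q) ≤ (sSup RS) ^ 2 := by
      set W := q.coeff.support.image key with hW
      have hdec : ∀ i : Fin k, L2sq (p i * q) = ∑ w ∈ W, L2sq (p i * piece q w) :=
        fun i => L2sq_conv_decomp (p i) q (hp i)
      calc ∑ i : Fin k, L2sq (p i * q)
          = ∑ w ∈ W, ∑ i : Fin k, L2sq (p i * piece q w) := by
            rw [← Finset.sum_comm]
            exact Finset.sum_congr rfl fun i _ => hdec i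
        _ ≤ ∑ w ∈ W, (sSup RS) ^ 2 * L2sq (piece q w) := by
            refine Finset.sum_le_sum fun w _ => ?_
            by_cases hz : piece q w = 0
            · simp [hz, mul_zero, L2sq_zero]
            · set c : ℝ := L2sq (piece q w) with hc
              have hcpos : 0 < c := L2sq_pos hz
              set s : ℂ := (((Real.sqrt c)⁻¹ : ℝ) : ℂ) with hs
              have hns : ‖s‖ ^ 2 = c⁻¹ := by
                rw [hs, Complex.norm_real, Real.norm_eq_abs, abs_of_nonneg (by positivity), inv_pow,
                  Real.sq_sqrt hcpos.le]
              set q'' : MonoidAlgebra ℂ MInf := s • piece q w with hq''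
              have hq''a : SupportedOnAlpha q'' := fun x hx =>
                piece_supported q w x (by rw [MonoidAlgebra.coeff_smul] at hx; exact Finsupp.support_smul hx)
              have hq''n : l2norm q'' ≤ 1 := by
                rw [l2norm_eq, hq'', L2sq_smul, hns, inv_mul_cancel₀ hcpos.ne',
                  Real.sqrt_one]
              have hmem : Real.sqrt (∑ i : Fin k, (l2norm (p i * q'')) ^ 2) ∈ RS :=
                ⟨q'', hq''a, hq''n, rfl⟩
              have hle : Real.sqrt (∑ i : Fin k, (l2norm (p i * q'')) ^ 2) ≤ sSup RS :=
                le_csSup hbddR hmem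
              have hsq : ∑ i : Fin k, L2sq (p i * q'') ≤ (sSup RS) ^ 2 := by
                have h1 := pow_le_pow_left₀ (Real.sqrt_nonneg _) hle 2
                rwa [key2 q'', Real.sq_sqrt (Finset.sum_nonneg fun i _ => L2sq_nonneg _)]
                  at h1
              have hsc : ∀ i : Fin k, L2sq (p i * q'') = c⁻¹ * L2sq (p i * piece q w) := by
                intro i
                rw [hq'', mul_smul_comm, L2sq_smul, hns]
              have : ∑ i : Fin k, L2sq (p i * piece q w)
                  = c * ∑ i : Fin k, L2sq (p i * q'') := by
                rw [Finset.mul_sum]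
                refine Finset.sum_congr rfl fun i _ => ?_
                rw [hsc i, ← mul_assoc, mul_inv_cancel₀ hcpos.ne', one_mul]
              rw [this, mul_comm ((sSup RS) ^ 2) c]
              exact mul_le_mul_of_nonneg_left hsq hcpos.le
        _ = (sSup RS) ^ 2 * L2sq q := by
            rw [← Finset.mul_sum, ← L2sq_decomp]
        _ ≤ (sSup RS) ^ 2 * 1 := mul_le_mul_of_nonneg_left (L2sq_le_one hq1) (sq_nonneg _)
        _ = (sSup RS) ^ 2 := mul_one _
    calc Real.sqrt (∑ i : Fin k, L2sq (p i * q)) ≤ Real.sqrt ((sSup RS) ^ 2) :=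
          Real.sqrt_le_sqrt hclaim
      _ = sSup RS := Real.sqrt_sq hS0
  · -- RS ⊆ LS
    rintro t ⟨q, _, hq1, rfl⟩
    exact ⟨q, hq1, by rw [key1 q, key2 q]⟩
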